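/- For the scalar function φ(s, t) = t ln(t/s) + s - t defined for s > 0, t ≥ 0, the pointwise inequality (s - t)² ≤ 2 max(s, t) · φ(s, t) holds for all s > 0 and t ≥ 0. -/

import Mathlib

lemma one_sub_inv_le_log (x : ℝ) (hx : 0 < x) : 1 - 1/x ≤ Real.log x := by
  have h := Real.log_le_sub_one_of_pos (show (0:ℝ) < 1/x by positivity)
  rw [one_div, Real.log_inv] at h
  rw [one_div]
  linarith

lemma aux_lower (x : ℝ) (hx : 1 ≤ x) : 2*(x-1) ≤ (x+1) * Real.log x := by
  set f : ℝ → ℝ := fun x => (x+1) * Real.log x - 2*(x-1) with hf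
  have hderiv : ∀ y ∈ Set.Ici (1:ℝ), HasDerivAt f (1 * Real.log y + (y+1) * y⁻¹ - 2) y := by
    intro y hy
    have hy0 : (0:ℝ) < y := lt_of_lt_of_le one_pos hy
    exact (((hasDerivAt_id y).add_const 1).mul (Real.hasDerivAt_log hy0.ne')).sub
      (((hasDerivAt_id y).sub_const 1).const_mul 2 |>.congr_deriv (by ring))
  have hmono : MonotoneOn f (Set.Ici 1) := by
    apply monotoneOn_of_deriv_nonneg (convex_Ici 1)
    · exact fun y hy => (hderiv y hy).continuousAt.continuousWithinAt
    · intro y hy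
      rw [interior_Ici] at hy
      exact (hderiv y (Set.mem_Ici.mpr (le_of_lt hy))).differentiableAt.differentiableWithinAt
    · intro y hy
      rw [interior_Ici] at hy
      have hy0 : (0:ℝ) < y := lt_trans one_pos hy
      rw [(hderiv y (Set.mem_Ici.mpr (le_of_lt hy))).deriv]
      have h1 : 1 - 1/y ≤ Real.log y := one_sub_inv_le_log y hy0
      have h2 : (y+1) * y⁻¹ = 1 + 1/y := by field_simp
      rw [h2]; linarith
  have h := hmono (Set.self_mem_Ici) hx hx
  simp only [hf, Real.log_one] at h
  linarith

lemma aux_upper (y : ℝ) (hy : 1 ≤ y) : 2*y*Real.log y ≤ y^2 - 1 := by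
  set g : ℝ → ℝ := fun y => y^2 - 1 - 2*y*Real.log y with hg
  have hderiv : ∀ z ∈ Set.Ici (1:ℝ), HasDerivAt g (2*z - (2 * Real.log z + 2*z * z⁻¹)) z := by
    intro z hz
    have hz0 : (0:ℝ) < z := lt_of_lt_of_le one_pos hz
    have h1 : HasDerivAt (fun z : ℝ => z^2 - 1) (2*z) z := by
      simpa using ((hasDerivAt_pow 2 z).sub_const 1)
    have h2 : HasDerivAt (fun z : ℝ => 2*z*Real.log z) (2 * Real.log z + 2*z * z⁻¹) z := by
      exact (((hasDerivAt_id' z).const_mul 2).mul (Real.hasDerivAt_log hz0.ne')).congr_deriv (by ring)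
    exact h1.sub h2
  have hmono : MonotoneOn g (Set.Ici 1) := by
    apply monotoneOn_of_deriv_nonneg (convex_Ici 1)
    · exact fun z hz => (hderiv z hz).continuousAt.continuousWithinAt
    · intro z hz
      rw [interior_Ici] at hz
      exact (hderiv z (Set.mem_Ici.mpr (le_of_lt hz))).differentiableAt.differentiableWithinAt
    · intro z hz
      rw [interior_Ici] at hz
      have hz0 : (0:ℝ) < z := lt_trans one_pos hz
      rw [(hderiv z (Set.mem_Ici.mpr (le_of_lt hz))).deriv]
      have h1 : Real.log z ≤ z - 1 := Real.log_le_sub_one_of_pos hz0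
      have h2 : 2*z * z⁻¹ = 2 := by field_simp
      rw [h2]; linarith
  have h := hmono (Set.self_mem_Ici) hy hy
  simp only [hg, Real.log_one] at h
  linarith

theorem sq_le_two_max_mul_klIntegrand (s t : ℝ) (hs : 0 < s) (ht : 0 ≤ t) :
    (s - t) ^ 2 ≤ 2 * max s t * (t * Real.log (t / s) + s - t) := by
  rcases eq_or_lt_of_le ht with rfl | ht0
  · simp only [zero_div, Real.log_zero, mul_zero, zero_add, sub_zero, zero_mul, max_eq_left hs.le]
    nlinarith
  rcases le_total t s with hts | hts
  · -- s ≥ t > 0 : max = s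
    rw [max_eq_left hts]
    have hy : 1 ≤ s/t := (one_le_div ht0).mpr hts
    have h := aux_upper (s/t) hy
    have hlog : Real.log (t/s) = - Real.log (s/t) := by
      rw [← Real.log_inv]; congr 1; field_simp
    rw [hlog]
    have hst : Real.log (s/t) * (2*s*t) ≤ s^2 - t^2 := by
      have := mul_le_mul_of_nonneg_right h (sq_nonneg t)
      have ht2 : (s/t)^2 * t^2 = s^2 := by field_simp
      have ht3 : 2*(s/t)*Real.log (s/t) * t^2 = Real.log (s/t) * (2*s*t) := by
        field_simp
      nlinarith [sq_nonneg t]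
    nlinarith
  · -- t ≥ s > 0 : max = t
    rw [max_eq_right hts]
    have hx : 1 ≤ t/s := (one_le_div hs).mpr hts
    have h := aux_lower (t/s) hx
    have hst : 2*s*(t-s) ≤ (t+s) * Real.log (t/s) * s := by
      have := mul_le_mul_of_nonneg_right h hs.le
      have h1 : 2*(t/s-1)*s = 2*(t-s) := by field_simp
      have h2 : (t/s+1) * Real.log (t/s) * s = (t+s) * Real.log (t/s) := by
        field_simp
      nlinarith
    have hL : 2*(t-s) ≤ (t+s) * Real.log (t/s) := by
      have h3 : 2*(t-s)*s ≤ ((t+s) * Real.log (t/s))*s := by nlinarith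
      exact le_of_mul_le_mul_right h3 hs
    have hd : 0 ≤ (t-s)^3 := pow_nonneg (sub_nonneg.mpr hts) 3
    nlinarith [mul_le_mul_of_nonneg_left hL (mul_pos ht0 ht0).le, hd, sq_nonneg (t-s)]
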